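/- Let ρ > 0, let Σ ∈ ℝ^{d×d} be symmetric positive definite, and let D ∈ ℝ^{d×d} be symmetric positive semidefinite with D ≠ 0. Then there exists a unique γ⋆ ∈ ℝ such that γ⋆ I_d − D is positive definite and Tr(Σ (I_d − γ⋆ (γ⋆ I_d − D)^{-1})²) = ρ²; moreover, the matrix S⋆ = (γ⋆)² (γ⋆ I_d − D)^{-1} Σ (γ⋆ I_d − D)^{-1} maximizes ⟨S, D⟩ over all symmetric positive semidefinite S ∈ ℝ^{d×d} with B(S) ≤ ρ², and S⋆ ⪰ λ_min(Σ)·I_d. -/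

import Mathlib

open Matrix

-- `msqrt M` is the unique symmetric PSD square root of a symmetric PSD matrix `M` (else `0`).
open Classical in
noncomputable def msqrt {ι : Type*} [Fintype ι] [DecidableEq ι] (M : Matrix ι ι ℝ) : Matrix ι ι ℝ :=
  if h : M.PosSemidef then
    (h.1.eigenvectorUnitary : Matrix ι ι ℝ) * diagonal (Real.sqrt ∘ h.1.eigenvalues) *
      (star h.1.eigenvectorUnitary : Matrix ι ι ℝ) else 0

/-- `Bdist Sg S = Tr(S + Σ − 2(Σ^{1/2} S Σ^{1/2})^{1/2})`. -/
noncomputable def Bdist {ι : Type*} [Fintype ι] [DecidableEq ι] (Sg S : Matrix ι ι ℝ) : ℝ :=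
  (S + Sg - (2:ℝ) • msqrt (msqrt Sg * S * msqrt Sg)).trace

namespace StmtAux

variable {n : Type*} [Fintype n] [DecidableEq n]

section MsqrtAux
open scoped MatrixOrder

lemma msqrt_eq_cfc {M : Matrix n n ℝ} (h : M.PosSemidef) : msqrt M = CFC.sqrt M := by
  rw [msqrt, dif_pos h, CFC.sqrt_eq_cfc, cfc_nnreal_eq_real _ M, h.1.cfc_eq]
  simp only [IsHermitian.cfc, Unitary.conjStarAlgAut_apply]
  congr 3
  funext i
  simp [Real.coe_sqrt, Real.coe_toNNReal', h.eigenvalues_nonneg i]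

lemma msqrt_psd {M : Matrix n n ℝ} (h : M.PosSemidef) : (msqrt M).PosSemidef := by
  rw [msqrt_eq_cfc h]
  exact nonneg_iff_posSemidef.mp (CFC.sqrt_nonneg M)

lemma msqrt_mul_self {M : Matrix n n ℝ} (h : M.PosSemidef) : msqrt M * msqrt M = M := by
  rw [msqrt_eq_cfc h]
  exact CFC.sqrt_mul_sqrt_self M (nonneg_iff_posSemidef.mpr h)

lemma msqrt_sq {M : Matrix n n ℝ} (h : M.PosSemidef) : msqrt (M ^ 2) = M := by
  rw [msqrt_eq_cfc (h.pow 2)]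
  exact CFC.sqrt_sq M (nonneg_iff_posSemidef.mpr h)

end MsqrtAux

lemma posdef_diag_pos {M : Matrix n n ℝ} (hM : M.PosDef) (i : n) : 0 < M i i := by
  exact hM.diag_pos

lemma psd_diag_nonneg {M : Matrix n n ℝ} (hM : M.PosSemidef) (i : n) : 0 ≤ M i i := by
  exact hM.diag_nonneg

lemma psd_trace_nonneg {M : Matrix n n ℝ} (hM : M.PosSemidef) : 0 ≤ M.trace :=
  Finset.sum_nonneg fun i _ => psd_diag_nonneg hM i

lemma psd_smul {M : Matrix n n ℝ} (hM : M.PosSemidef) {c : ℝ} (hc : 0 ≤ c) :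
    (c • M).PosSemidef := by
  exact hM.smul hc

lemma posdef_conj {B N : Matrix n n ℝ} (hN : N.PosDef) (hB : IsUnit B) :
    (B * N * Bᴴ).PosDef := by
  exact (Matrix.IsUnit.posDef_star_right_conjugate_iff hB).mpr hN

lemma trace_mul_diag (M : Matrix n n ℝ) (v : n → ℝ) :
    (M * diagonal v).trace = ∑ i, M i i * v i := by
  simp [Matrix.trace, Matrix.diag, Matrix.mul_diagonal]

end StmtAux

namespace StmtAux

variable {n : Type*} [Fintype n] [DecidableEq n]

/-- conjugation of a diagonal matrix by `V`. -/
noncomputable def cong (V : Matrix n n ℝ) (v : n → ℝ) : Matrix n n ℝ :=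
  V * diagonal v * Vᴴ

variable {V : Matrix n n ℝ}

lemma cong_mul (hV2 : Vᴴ * V = 1) (v w : n → ℝ) : cong V v * cong V w = cong V (fun i => v i * w i) := by
  unfold cong
  calc V * diagonal v * Vᴴ * (V * diagonal w * Vᴴ)
      = V * diagonal v * (Vᴴ * V) * diagonal w * Vᴴ := by noncomm_ring
    _ = V * (diagonal v * diagonal w) * Vᴴ := by rw [hV2]; noncomm_ring
    _ = V * diagonal (fun i => v i * w i) * Vᴴ := by rw [diagonal_mul_diagonal]
        
lemma cong_one (hV1 : V * Vᴴ = 1) : cong V 1 = 1 := by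
  unfold cong
  have h : diagonal (1 : n → ℝ) = 1 := diagonal_one
  rw [h, mul_one, hV1]

lemma cong_smul (c : ℝ) (v : n → ℝ) : cong V (fun i => c * v i) = c • cong V v := by
  unfold cong
  rw [show (fun i => c * v i) = c • v from rfl, diagonal_smul, Matrix.mul_smul, Matrix.smul_mul]

lemma cong_sub (v w : n → ℝ) : cong V (v - w) = cong V v - cong V w := by
  unfold cong
  rw [show (v - w) = (fun i => v i - w i) from rfl, ← diagonal_sub]; noncomm_ring

lemma cong_add (v w : n → ℝ) : cong V (v + w) = cong V v + cong V w := by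
  unfold cong
  rw [show (v + w) = (fun i => v i + w i) from rfl, ← diagonal_add]; noncomm_ring

lemma cong_herm (v : n → ℝ) : (cong V v).IsHermitian := by
  exact isHermitian_mul_mul_conjTranspose V (A := diagonal v)
    (isHermitian_diagonal_of_self_adjoint _ (star_trivial _))

lemma cong_posDef (hV1 : V * Vᴴ = 1) {v : n → ℝ} (hv : ∀ i, 0 < v i) : (cong V v).PosDef :=
  posdef_conj (Matrix.PosDef.diagonal hv)
    ⟨⟨V, Vᴴ, hV1, by rwa [mul_eq_one_comm]⟩, rfl⟩

lemma cong_posSemidef {v : n → ℝ} (hv : ∀ i, 0 ≤ v i) : (cong V v).PosSemidef :=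
  (Matrix.PosSemidef.diagonal hv).mul_mul_conjTranspose_same V

lemma cong_inv (hV1 : V * Vᴴ = 1) (hV2 : Vᴴ * V = 1) {v : n → ℝ} (hv : ∀ i, v i ≠ 0) : (cong V v)⁻¹ = cong V (fun i => (v i)⁻¹) := by
  apply Matrix.inv_eq_right_inv
  rw [cong_mul hV2]
  have : (fun i => v i * (v i)⁻¹) = (1 : n → ℝ) := funext fun i => mul_inv_cancel₀ (hv i)
  rw [this, cong_one hV1]

lemma trace_mul_cong (M : Matrix n n ℝ) (v : n → ℝ) :
    (M * cong V v).trace = ∑ i, (Vᴴ * M * V) i i * v i := by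
  rw [show M * cong V v = (M * V) * diagonal v * Vᴴ from by unfold cong; noncomm_ring,
    Matrix.trace_mul_cycle, trace_mul_diag]
  exact Finset.sum_congr rfl fun i _ => by rw [Matrix.mul_assoc]

end StmtAux

namespace StmtAux

variable {n : Type*} [Fintype n] [DecidableEq n]

lemma herm_transpose_eq {M : Matrix n n ℝ} (h : M.IsHermitian) : Mᵀ = M := by
  have := h.eq
  ext i j
  have h2 := congrFun (congrFun this i) j
  simpa [Matrix.conjTranspose_apply] using h2

end StmtAux

set_option maxHeartbeats 2000000 in
open StmtAux in
/-- There is a unique `γ⋆` with `γ⋆ I − D ≻ 0` solving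
`Tr(Σ (I − γ⋆(γ⋆ I − D)⁻¹)²) = ρ²`; moreover `S⋆ = (γ⋆)² (γ⋆I − D)⁻¹ Σ (γ⋆I − D)⁻¹`
maximizes `⟨S, D⟩` over the feasible set `{S ⪰ 0 : B(S) ≤ ρ²}`, and `S⋆ ⪰ λ_min(Σ) I`. -/
theorem stmt6 {d : ℕ} [NeZero d] (ρ : ℝ) (hρ : 0 < ρ) (Sg D : Matrix (Fin d) (Fin d) ℝ)
    (hSg : Sg.PosDef) (hD : D.PosSemidef) (hD0 : D ≠ 0) :
    ∃ γs : ℝ,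
      ((γs • (1 : Matrix (Fin d) (Fin d) ℝ) - D).PosDef ∧
        (Sg * (1 - γs • (γs • (1 : Matrix (Fin d) (Fin d) ℝ) - D)⁻¹) ^ 2).trace = ρ ^ 2) ∧
      (∀ γ' : ℝ, (γ' • (1 : Matrix (Fin d) (Fin d) ℝ) - D).PosDef →
        (Sg * (1 - γ' • (γ' • (1 : Matrix (Fin d) (Fin d) ℝ) - D)⁻¹) ^ 2).trace = ρ ^ 2 →
        γ' = γs) ∧
      (γs ^ 2 • ((γs • (1 : Matrix (Fin d) (Fin d) ℝ) - D)⁻¹ * Sg *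
          (γs • (1 : Matrix (Fin d) (Fin d) ℝ) - D)⁻¹)).PosSemidef ∧
      Bdist Sg (γs ^ 2 • ((γs • (1 : Matrix (Fin d) (Fin d) ℝ) - D)⁻¹ * Sg *
          (γs • (1 : Matrix (Fin d) (Fin d) ℝ) - D)⁻¹)) ≤ ρ ^ 2 ∧
      (∀ S : Matrix (Fin d) (Fin d) ℝ, S.PosSemidef → Bdist Sg S ≤ ρ ^ 2 →
        (Sᵀ * D).trace ≤
          ((γs ^ 2 • ((γs • (1 : Matrix (Fin d) (Fin d) ℝ) - D)⁻¹ * Sg *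
            (γs • (1 : Matrix (Fin d) (Fin d) ℝ) - D)⁻¹))ᵀ * D).trace) ∧
      ((γs ^ 2 • ((γs • (1 : Matrix (Fin d) (Fin d) ℝ) - D)⁻¹ * Sg *
          (γs • (1 : Matrix (Fin d) (Fin d) ℝ) - D)⁻¹)) -
        (⨅ i, hSg.1.eigenvalues i) • (1 : Matrix (Fin d) (Fin d) ℝ)).PosSemidef := by
  classical
  -- diagonalization of D
  set μ : Fin d → ℝ := hD.1.eigenvalues with hμdef
  set V : Matrix (Fin d) (Fin d) ℝ := (hD.1.eigenvectorUnitary : Matrix (Fin d) (Fin d) ℝ)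
    with hVdef
  have hV1 : V * Vᴴ = 1 := by
    rw [← Matrix.star_eq_conjTranspose]
    exact mem_unitaryGroup_iff.mp hD.1.eigenvectorUnitary.2
  have hV2 : Vᴴ * V = 1 := by
    rw [← Matrix.star_eq_conjTranspose]
    exact mem_unitaryGroup_iff'.mp hD.1.eigenvectorUnitary.2
  have hDeq : D = cong V μ := by
    have h := hD.1.spectral_theorem
    rw [h]
    unfold cong
    rw [Unitary.conjStarAlgAut_apply, Matrix.star_eq_conjTranspose]
    congr 1
  have hμ0 : ∀ i, 0 ≤ μ i := hD.eigenvalues_nonneg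
  obtain ⟨j0, -, hj0⟩ : ∃ j ∈ Finset.univ, ∀ i ∈ Finset.univ, μ i ≤ μ j :=
    Finset.exists_max_image Finset.univ μ ⟨⟨0, Nat.pos_of_ne_zero (NeZero.ne d)⟩,
      Finset.mem_univ _⟩
  set m : ℝ := μ j0 with hmdef
  have hμm : ∀ i, μ i ≤ m := fun i => hj0 i (Finset.mem_univ i)
  have hm0 : 0 < m := by
    rcases lt_or_eq_of_le (hμ0 j0) with h | h
    · exact h
    · exfalso; apply hD0
      rw [hDeq]
      have hz : μ = 0 := funext fun i => le_antisymm ((hμm i).trans h.ge) (hμ0 i)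
      rw [hz]
      unfold cong
      rw [show (0 : Fin d → ℝ) = fun _ => (0:ℝ) from rfl]
      simp
  -- the positive-definite diagonal entries of the conjugated Sg
  set c : Fin d → ℝ := fun i => (Vᴴ * Sg * V) i i with hcdef
  have hc : ∀ i, 0 < c i := by
    intro i
    have hpd : (Vᴴ * Sg * V).PosDef := by
      have := posdef_conj (B := Vᴴ) hSg ⟨⟨Vᴴ, V, hV2, hV1⟩, rfl⟩
      rwa [conjTranspose_conjTranspose] at this
    exact posdef_diag_pos hpd i
  -- scalarization
  have hsub : ∀ γ : ℝ, γ • (1 : Matrix (Fin d) (Fin d) ℝ) - D =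
      cong V (fun i => γ - μ i) := by
    intro γ
    have h1 : cong V (fun i => γ - μ i) = γ • cong V 1 - cong V μ := by
      rw [← cong_smul, ← cong_sub]
      exact congrArg (cong V) (funext fun i => by simp)
    rw [h1, cong_one hV1, ← hDeq]
  set G : ℝ → ℝ := fun γ => ∑ i, c i * (μ i / (γ - μ i)) ^ 2 with hGdef
  have key : ∀ γ : ℝ, m < γ →
      (Sg * (1 - γ • (γ • (1 : Matrix (Fin d) (Fin d) ℝ) - D)⁻¹) ^ 2).trace = G γ := by
    intro γ hγ
    have hpos : ∀ i, 0 < γ - μ i := fun i => sub_pos.mpr ((hμm i).trans_lt hγ)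
    have hone_sub : 1 - γ • (γ • (1 : Matrix (Fin d) (Fin d) ℝ) - D)⁻¹
        = cong V (fun i => 1 - γ * (γ - μ i)⁻¹) := by
      rw [hsub, cong_inv hV1 hV2 (fun i => (hpos i).ne')]
      have h1 : cong V (fun i => 1 - γ * (γ - μ i)⁻¹)
          = cong V 1 - γ • cong V (fun i => (γ - μ i)⁻¹) := by
        rw [← cong_smul, ← cong_sub]
        exact congrArg (cong V) (funext fun i => by simp)
      rw [h1, cong_one hV1]
    rw [hone_sub, pow_two, cong_mul hV2, trace_mul_cong]
    simp only [hGdef]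
    refine Finset.sum_congr rfl fun i _ => ?_
    have h1 : γ - μ i ≠ 0 := (hpos i).ne'
    simp only [hcdef]
    field_simp
    ring
  -- strict antitonicity of G on (m, ∞)
  have hanti : StrictAntiOn G (Set.Ioi m) := by
    intro x hx y hy hxy
    simp only [hGdef]
    apply Finset.sum_lt_sum
    · intro i _
      have hxpos : 0 < x - μ i := sub_pos.mpr ((hμm i).trans_lt hx)
      have hypos : 0 < y - μ i := sub_pos.mpr ((hμm i).trans_lt hy)
      have hdiv : μ i / (y - μ i) ≤ μ i / (x - μ i) :=
        div_le_div_of_nonneg_left (hμ0 i) hxpos (by linarith)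
      have h2 : (μ i / (y - μ i))^2 ≤ (μ i / (x - μ i))^2 := by
        apply pow_le_pow_left₀ (div_nonneg (hμ0 i) hypos.le) hdiv
      exact mul_le_mul_of_nonneg_left h2 (hc i).le
    · refine ⟨j0, Finset.mem_univ j0, ?_⟩
      have hxpos : 0 < x - m := sub_pos.mpr hx
      have hypos : 0 < y - m := sub_pos.mpr hy
      have hdiv : m / (y - m) < m / (x - m) :=
        div_lt_div_of_pos_left hm0 hxpos (by linarith)
      have h2 : (m / (y - m))^2 < (m / (x - m))^2 := by
        apply pow_lt_pow_left₀ hdiv (by positivity)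
        norm_num
      exact mul_lt_mul_of_pos_left h2 (hc j0)
  -- choice of bracketing points
  set s : ℝ := Real.sqrt (c j0 * m^2 / ρ^2) with hsdef
  have hcj0m : (0:ℝ) < c j0 * m^2 / ρ^2 :=
    div_pos (mul_pos (hc j0) (by positivity)) (by positivity)
  have hs : 0 < s := Real.sqrt_pos.mpr hcj0m
  have hs2 : s^2 = c j0 * m^2 / ρ^2 := Real.sq_sqrt hcj0m.le
  set ε : ℝ := min 1 s with hεdef
  have hε : 0 < ε := lt_min one_pos hs
  set a : ℝ := m + ε with hadef
  set T : ℝ := Real.sqrt ((∑ i, c i) * m^2 / ρ^2) + 1 with hTdef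
  have hT1 : 1 ≤ T := by
    have := Real.sqrt_nonneg ((∑ i, c i) * m^2 / ρ^2)
    simp only [hTdef]; linarith
  have hT2 : (∑ i, c i) * m^2 / ρ^2 ≤ T^2 := by
    have hK : (0:ℝ) ≤ ∑ i, c i := Finset.sum_nonneg fun i _ => (hc i).le
    have h1 := Real.sq_sqrt (show (0:ℝ) ≤ (∑ i, c i) * m^2 / ρ^2 from
      div_nonneg (mul_nonneg hK (sq_nonneg m)) (sq_nonneg ρ))
    have h2 := Real.sqrt_nonneg ((∑ i, c i) * m^2 / ρ^2)
    nlinarith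
  set b : ℝ := m + T with hbdef
  have ham : m < a := by simp only [hadef]; linarith
  have hab : a ≤ b := by
    have : ε ≤ 1 := min_le_left _ _
    simp only [hadef, hbdef]; linarith
  have hbm : m < b := lt_of_lt_of_le ham hab
  have hGa : ρ^2 ≤ G a := by
    have hterm : c j0 * (m / (a - m))^2 ≤ G a := by
      simp only [hGdef]
      have := Finset.single_le_sum
        (f := fun i => c i * (μ i / (a - μ i))^2)
        (fun i _ => mul_nonneg (hc i).le (sq_nonneg _)) (Finset.mem_univ j0)
      simpa using this
    have ham' : a - m = ε := by simp [hadef]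
    have hεs : ε ≤ s := min_le_right _ _
    have hε2 : ε^2 ≤ s^2 := pow_le_pow_left₀ hε.le hεs 2
    have : ρ^2 ≤ c j0 * (m / ε)^2 := by
      rw [div_pow, ← mul_div_assoc, le_div_iff₀ (pow_pos hε 2)]
      calc ρ^2 * ε^2 ≤ ρ^2 * s^2 := by nlinarith
        _ = c j0 * m^2 := by rw [hs2]; field_simp
    calc ρ^2 ≤ c j0 * (m / ε)^2 := this
      _ = c j0 * (m / (a - m))^2 := by rw [ham']
      _ ≤ G a := hterm
  have hGb : G b ≤ ρ^2 := by
    have hterm : G b ≤ (∑ i, c i) * (m / T)^2 := by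
      simp only [hGdef, Finset.sum_mul]
      apply Finset.sum_le_sum
      intro i _
      have hbμ : 0 < b - μ i := sub_pos.mpr ((hμm i).trans_lt hbm)
      have hTb : T ≤ b - μ i := by
        have := hμ0 i; simp only [hbdef]; linarith [hμm i]
      have hdiv : μ i / (b - μ i) ≤ m / T := by
        apply div_le_div₀ (hm0.le) (hμm i) (by linarith) hTb
      have h2 : (μ i / (b - μ i))^2 ≤ (m / T)^2 := by
        apply pow_le_pow_left₀ (div_nonneg (hμ0 i) hbμ.le) hdiv
      exact mul_le_mul_of_nonneg_left h2 (hc i).le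
    have hTpos : (0:ℝ) < T := by linarith
    have : (∑ i, c i) * (m / T)^2 ≤ ρ^2 := by
      rw [div_pow, ← mul_div_assoc, div_le_iff₀ (pow_pos hTpos 2)]
      have hT2' : (∑ i, c i) * m^2 ≤ T^2 * ρ^2 := by
        rw [div_le_iff₀ (by positivity)] at hT2
        linarith
      linarith
    linarith
  -- IVT
  have hcont : ContinuousOn G (Set.Icc a b) := by
    simp only [hGdef]
    apply continuousOn_finset_sum
    intro i _
    apply ContinuousOn.mul continuousOn_const
    apply ContinuousOn.pow
    apply ContinuousOn.div continuousOn_const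
    · exact (continuous_id.sub continuous_const).continuousOn
    · intro x hx
      have : m < x := lt_of_lt_of_le ham hx.1
      have := (hμm i).trans_lt this
      exact (sub_pos.mpr this).ne'
  obtain ⟨γs, hγsmem, hγseq⟩ : ∃ x ∈ Set.Icc a b, G x = ρ^2 := by
    have himg := intermediate_value_Icc' hab hcont
    have : ρ^2 ∈ G '' Set.Icc a b := himg ⟨hGb, hGa⟩
    obtain ⟨x, hx, hxeq⟩ := this
    exact ⟨x, hx, hxeq⟩
  have hγsm : m < γs := lt_of_lt_of_le ham hγsmem.1
  have hγs0 : 0 < γs := hm0.trans hγsm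
  have hpos : ∀ i, 0 < γs - μ i := fun i => sub_pos.mpr ((hμm i).trans_lt hγsm)
  -- the matrix A⋆ and S⋆
  set α : Fin d → ℝ := fun i => γs * (γs - μ i)⁻¹ with hαdef
  have hα_pos : ∀ i, 0 < α i := fun i => mul_pos hγs0 (inv_pos.mpr (hpos i))
  have hα_one : ∀ i, 1 ≤ α i := by
    intro i
    simp only [hαdef]
    rw [← div_eq_mul_inv, le_div_iff₀ (hpos i)]
    have := hμ0 i
    linarith
  set Astar : Matrix (Fin d) (Fin d) ℝ := cong V α with hAstardef
  have hEinv : (γs • (1 : Matrix (Fin d) (Fin d) ℝ) - D)⁻¹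
      = cong V (fun i => (γs - μ i)⁻¹) := by
    rw [hsub]
    exact cong_inv hV1 hV2 (fun i => (hpos i).ne')
  have hSstar : γs ^ 2 • ((γs • (1 : Matrix (Fin d) (Fin d) ℝ) - D)⁻¹ * Sg *
      (γs • (1 : Matrix (Fin d) (Fin d) ℝ) - D)⁻¹) = Astar * Sg * Astar := by
    have h1 : Astar = γs • cong V (fun i => (γs - μ i)⁻¹) := by
      rw [hAstardef, ← cong_smul]
    rw [hEinv, h1, Matrix.smul_mul, Matrix.mul_smul, Matrix.smul_mul, smul_smul, ← pow_two]
  -- matrices and traces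
  have hAstar_herm : Astar.IsHermitian := cong_herm α
  have hAstar_psd : Astar.PosSemidef := cong_posSemidef (fun i => (hα_pos i).le)
  have hAstar_pd : Astar.PosDef := cong_posDef hV1 hα_pos
  have hSstar_psd : (Astar * Sg * Astar).PosSemidef := by
    have := hSg.posSemidef.mul_mul_conjTranspose_same Astar
    rwa [hAstar_herm.eq] at this
  set R : Matrix (Fin d) (Fin d) ℝ := msqrt Sg with hRdef
  have hR_psd : R.PosSemidef := msqrt_psd hSg.posSemidef
  have hRH : Rᴴ = R := hR_psd.1
  have hRR : R * R = Sg := msqrt_mul_self hSg.posSemidef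
  have hmsqrtSg : msqrt Sg = R := rfl
  have hRdet : IsUnit R.det := by
    have h1 : R.det * R.det = Sg.det := by rw [← Matrix.det_mul, hRR]
    have h2 : 0 < Sg.det := hSg.det_pos
    refine isUnit_iff_ne_zero.mpr fun h => ?_
    rw [h, zero_mul] at h1
    exact h2.ne' h1.symm
  set C : Matrix (Fin d) (Fin d) ℝ := R * Astar * R with hCdef
  have hC_psd : C.PosSemidef := by
    have := hAstar_psd.mul_mul_conjTranspose_same R
    rwa [hRH] at this
  have hCH : Cᴴ = C := hC_psd.1
  have htr_cong : ∀ v : Fin d → ℝ, (Sg * cong V v).trace = ∑ i, c i * v i := by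
    intro v
    rw [trace_mul_cong]
    try exact Finset.sum_congr rfl fun i _ => by simp only [hcdef]
  have htrSg : Sg.trace = ∑ i, c i := by
    have h := htr_cong 1
    rw [cong_one hV1, mul_one] at h
    simpa using h
  have htrC : C.trace = ∑ i, c i * α i := by
    rw [hCdef, Matrix.trace_mul_cycle, hRR, hAstardef, htr_cong]
  have htrSstar : (Astar * Sg * Astar).trace = ∑ i, c i * (α i * α i) := by
    rw [Matrix.trace_mul_cycle, Matrix.trace_mul_comm, hAstardef, cong_mul hV2, htr_cong]
  have htrSD : (Astar * Sg * Astar * D).trace = ∑ i, c i * (α i * μ i * α i) := by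
    rw [show Astar * Sg * Astar * D = Astar * Sg * (Astar * D) from by noncomm_ring,
      Matrix.trace_mul_cycle, Matrix.trace_mul_comm, hDeq, hAstardef, cong_mul hV2,
      cong_mul hV2, htr_cong]
  have hBstar : Bdist Sg (Astar * Sg * Astar) = ρ^2 := by
    have hinner : msqrt Sg * (Astar * Sg * Astar) * msqrt Sg = C^2 := by
      rw [hmsqrtSg, hCdef, pow_two, ← hRR]
      noncomm_ring
    have hmsq : msqrt (msqrt Sg * (Astar * Sg * Astar) * msqrt Sg) = C := by
      rw [hinner]
      exact msqrt_sq hC_psd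
    rw [Bdist, hmsq, Matrix.trace_sub, Matrix.trace_add, Matrix.trace_smul, htrSstar,
      htrSg, htrC, ← hγseq]
    simp only [hGdef, smul_eq_mul]
    rw [Finset.mul_sum, ← Finset.sum_add_distrib, ← Finset.sum_sub_distrib]
    refine Finset.sum_congr rfl fun i _ => ?_
    have h1 : γs - μ i ≠ 0 := (hpos i).ne'
    simp only [hαdef]
    field_simp
    ring
  refine ⟨γs, ⟨?_, ?_⟩, ?_, ?_, ?_, ?_, ?_⟩
  · rw [hsub]
    exact cong_posDef hV1 hpos
  · rw [key γs hγsm]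
    exact hγseq
  · -- uniqueness
    intro γ' h1 h2
    have hγ'm : m < γ' := by
      rw [hsub] at h1
      have hdiagPD : (diagonal (fun i => γ' - μ i)).PosDef := by
        have h3 := posdef_conj (B := Vᴴ) h1 ⟨⟨Vᴴ, V, hV2, hV1⟩, rfl⟩
        rw [conjTranspose_conjTranspose] at h3
        have h4 : Vᴴ * cong V (fun i => γ' - μ i) * V = diagonal (fun i => γ' - μ i) := by
          unfold cong
          calc Vᴴ * (V * diagonal (fun i => γ' - μ i) * Vᴴ) * V
              = (Vᴴ * V) * diagonal (fun i => γ' - μ i) * (Vᴴ * V) := by noncomm_ring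
            _ = diagonal (fun i => γ' - μ i) := by rw [hV2]; noncomm_ring
        rwa [h4] at h3
      have h5 := posdef_diag_pos hdiagPD j0
      rw [Matrix.diagonal_apply_eq] at h5
      linarith
    have hGeq : G γ' = G γs := by
      rw [← key γ' hγ'm] at *
      rw [h2, ← hγseq]
    exact hanti.injOn (Set.mem_Ioi.mpr hγ'm) (Set.mem_Ioi.mpr hγsm) hGeq
  · rw [hSstar]
    exact hSstar_psd
  · rw [hSstar, hBstar]
  · -- optimality
    intro S hS hBS
    rw [hSstar, herm_transpose_eq hS.1, herm_transpose_eq hSstar_psd.1]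
    have hRSR : (R * S * R).PosSemidef := by
      have := hS.mul_mul_conjTranspose_same R
      rwa [hRH] at this
    set Y : Matrix (Fin d) (Fin d) ℝ := msqrt (R * S * R) with hYdef2
    have hY_psd : Y.PosSemidef := msqrt_psd hRSR
    have hYH : Yᴴ = Y := hY_psd.1
    have hYY : Y * Y = R * S * R := msqrt_mul_self hRSR
    have hmsqY : msqrt (msqrt Sg * S * msqrt Sg) = Y := by
      rw [hmsqrtSg]
    have hAinv_pd : (Astar⁻¹).PosDef := hAstar_pd.inv
    set W : Matrix (Fin d) (Fin d) ℝ := R⁻¹ * Astar⁻¹ * R⁻¹ with hWdef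
    have hRiR : R⁻¹ * R = 1 := Matrix.nonsing_inv_mul R hRdet
    have hRRi : R * R⁻¹ = 1 := Matrix.mul_nonsing_inv R hRdet
    have hAiA : Astar⁻¹ * Astar = 1 :=
      Matrix.nonsing_inv_mul Astar hAstar_pd.det_pos.ne'.isUnit
    have hWC : W * C = 1 := by
      rw [hWdef, hCdef]
      calc R⁻¹ * Astar⁻¹ * R⁻¹ * (R * Astar * R)
          = R⁻¹ * Astar⁻¹ * (R⁻¹ * R) * (Astar * R) := by noncomm_ring
        _ = R⁻¹ * (Astar⁻¹ * Astar) * R := by rw [hRiR]; noncomm_ring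
        _ = R⁻¹ * R := by rw [hAiA]; noncomm_ring
        _ = 1 := hRiR
    have hCW : C * W = 1 := mul_eq_one_comm.mp hWC
    have hW_psd : W.PosSemidef := by
      have h1 : (R⁻¹)ᴴ = R⁻¹ := by rw [Matrix.conjTranspose_nonsing_inv, hRH]
      have := hAinv_pd.posSemidef.mul_mul_conjTranspose_same R⁻¹
      rwa [h1] at this
    have hZH : (Y - C)ᴴ = Y - C := by rw [Matrix.conjTranspose_sub, hYH, hCH]
    have h0 : 0 ≤ ((Y - C) * W * (Y - C)).trace := by
      have := hW_psd.mul_mul_conjTranspose_same (Y - C)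
      rw [hZH] at this
      exact psd_trace_nonneg this
    have hAinv_eq : Astar⁻¹ = 1 - γs⁻¹ • D := by
      have h1 : Astar⁻¹ = cong V (fun i => (α i)⁻¹) := by
        rw [hAstardef]
        exact cong_inv hV1 hV2 (fun i => (hα_pos i).ne')
      rw [h1, hDeq]
      have h2 : cong V (fun i => (α i)⁻¹) = cong V 1 - γs⁻¹ • cong V μ := by
        rw [← cong_smul, ← cong_sub]
        refine congrArg (cong V) (funext fun i => ?_)
        simp only [hαdef, Pi.sub_apply, Pi.one_apply]
        have h3 : γs - μ i ≠ 0 := (hpos i).ne'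
        have h4 : γs ≠ 0 := hγs0.ne'
        field_simp
      rw [h2, cong_one hV1]
    have hexp : ((Y - C) * W * (Y - C)).trace
        = (Astar⁻¹ * S).trace - 2 * Y.trace + C.trace := by
      rw [Matrix.trace_mul_cycle]
      rw [show (Y - C) * (Y - C) * W = Y*Y*W - Y*C*W - C*Y*W + C*C*W from by noncomm_ring]
      rw [Matrix.trace_add, Matrix.trace_sub, Matrix.trace_sub]
      rw [show Y*C*W = Y from by rw [Matrix.mul_assoc, hCW, mul_one]]
      rw [show C*C*W = C from by rw [Matrix.mul_assoc, hCW, mul_one]]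
      have hCYW : (C*Y*W).trace = Y.trace := by
        rw [Matrix.trace_mul_cycle, hWC, one_mul]
      rw [hCYW]
      have hYYW : (Y*Y*W).trace = (Astar⁻¹ * S).trace := by
        rw [Matrix.trace_mul_comm, hYY]
        have hs1 : W * (R * S * R) = R⁻¹ * (Astar⁻¹ * S) * R := by
          rw [hWdef]
          calc R⁻¹ * Astar⁻¹ * R⁻¹ * (R * S * R)
              = R⁻¹ * Astar⁻¹ * (R⁻¹ * R) * (S * R) := by noncomm_ring
            _ = R⁻¹ * (Astar⁻¹ * S) * R := by rw [hRiR]; noncomm_ring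
        rw [hs1, Matrix.trace_mul_cycle, hRRi, one_mul]
      rw [hYYW]
      ring
    have hAinvS : (Astar⁻¹ * S).trace = S.trace - γs⁻¹ * (D * S).trace := by
      rw [hAinv_eq, Matrix.sub_mul, one_mul, Matrix.smul_mul, Matrix.trace_sub,
        Matrix.trace_smul, smul_eq_mul]
    have hBS' : S.trace + Sg.trace - 2*Y.trace ≤ ρ^2 := by
      rw [Bdist, hmsqY, Matrix.trace_sub, Matrix.trace_add, Matrix.trace_smul,
        smul_eq_mul] at hBS
      linarith
    have hid : ∑ i, c i * (α i * μ i * α i)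
        = γs * ρ^2 + γs * ((∑ i, c i * α i) - ∑ i, c i) := by
      rw [← hγseq]
      simp only [hGdef]
      rw [← Finset.sum_sub_distrib, Finset.mul_sum, Finset.mul_sum, ← Finset.sum_add_distrib]
      refine Finset.sum_congr rfl fun i _ => ?_
      have h1 : γs - μ i ≠ 0 := (hpos i).ne'
      have h4 : γs ≠ 0 := hγs0.ne'
      simp only [hαdef]
      field_simp
      ring
    have hstep : γs⁻¹ * (D * S).trace ≤ S.trace - 2*Y.trace + C.trace := by
      rw [hexp, hAinvS] at h0
      linarith
    rw [Matrix.trace_mul_comm, htrSD, hid]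
    calc (D * S).trace = γs * (γs⁻¹ * (D * S).trace) := by
          field_simp
      _ ≤ γs * (S.trace - 2*Y.trace + C.trace) :=
          mul_le_mul_of_nonneg_left hstep hγs0.le
      _ = γs * (S.trace + Sg.trace - 2*Y.trace) + γs * (C.trace - Sg.trace) := by ring
      _ ≤ γs * ρ^2 + γs * (C.trace - Sg.trace) := by
          have := mul_le_mul_of_nonneg_left hBS' hγs0.le
          linarith
      _ = γs * ρ^2 + γs * ((∑ i, c i * α i) - ∑ i, c i) := by rw [htrC, htrSg]
  · -- lower bound by λ_min
    set lam : ℝ := ⨅ i, hSg.1.eigenvalues i with hlamdef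
    have hlam0 : 0 ≤ lam := le_ciInf fun i => (hSg.eigenvalues_pos i).le
    set lamv : Fin d → ℝ := hSg.1.eigenvalues with hlamvdef
    set Wg : Matrix (Fin d) (Fin d) ℝ := (hSg.1.eigenvectorUnitary : Matrix (Fin d) (Fin d) ℝ)
      with hWgdef
    have hWg1 : Wg * Wgᴴ = 1 := by
      rw [← Matrix.star_eq_conjTranspose]
      exact mem_unitaryGroup_iff.mp hSg.1.eigenvectorUnitary.2
    have hWg2 : Wgᴴ * Wg = 1 := by
      rw [← Matrix.star_eq_conjTranspose]
      exact mem_unitaryGroup_iff'.mp hSg.1.eigenvectorUnitary.2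
    have hSgeq : Sg = cong Wg lamv := by
      have h := hSg.1.spectral_theorem
      rw [h]
      unfold cong
      rw [Unitary.conjStarAlgAut_apply, Matrix.star_eq_conjTranspose]
      congr 1
    have hSglam : (Sg - lam • (1 : Matrix (Fin d) (Fin d) ℝ)).PosSemidef := by
      have h1 : cong Wg (fun i => lamv i - lam)
          = cong Wg lamv - lam • cong Wg 1 := by
        rw [← cong_smul, ← cong_sub]
        exact congrArg (cong Wg) (funext fun i => by simp)
      have h2 : Sg - lam • (1 : Matrix (Fin d) (Fin d) ℝ)
          = cong Wg (fun i => lamv i - lam) := by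
        rw [h1, cong_one hWg1, ← hSgeq]
      rw [h2]
      exact cong_posSemidef fun i =>
        sub_nonneg.mpr (ciInf_le (Finite.bddBelow_range _) i)
    have hA2 : (Astar * Astar - 1).PosSemidef := by
      have h1 : Astar * Astar - 1 = cong V (fun i => α i * α i - 1) := by
        rw [hAstardef, cong_mul hV2,
          show (1 : Matrix (Fin d) (Fin d) ℝ) = cong V 1 from (cong_one hV1).symm, ← cong_sub]
        exact congrArg (cong V) (funext fun i => by simp)
      rw [h1]
      refine cong_posSemidef fun i => sub_nonneg.mpr ?_
      have := hα_one i
      nlinarith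
    have hdecomp : Astar * Sg * Astar - lam • (1 : Matrix (Fin d) (Fin d) ℝ)
        = Astar * (Sg - lam • (1 : Matrix (Fin d) (Fin d) ℝ)) * Astar
          + lam • (Astar * Astar - 1) := by
      rw [Matrix.mul_sub, Matrix.sub_mul, Matrix.mul_smul, mul_one, Matrix.smul_mul, smul_sub]
      abel
    rw [hSstar, hdecomp]
    apply Matrix.PosSemidef.add
    · have := hSglam.mul_mul_conjTranspose_same Astar
      rwa [hAstar_herm.eq] at this
    · exact psd_smul hA2 hlam0
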